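/- Let i ∈ {0,1} be fixed and let x : [0,∞) → ℝ³ be differentiable with x'(t) = g(x(t), i) for all t ≥ 0 and x(0) ∈ E := [0,1] × [0,∞) × [0,∞). Then x(t) ∈ E for all t ≥ 0, i.e. the set E is positively invariant under the flow of each of the vector fields g(·,0) and g(·,1). -/

import Mathlib

open Set Real

open Filter

/-- If `f T ≥ 0` and along `f T = 0` the derivative is positive, then `f ≥ 0`
slightly to the right of `T`. -/
lemma aux_persist (f : ℝ → ℝ) (T c : ℝ) (hf : HasDerivAt f c T) (h0 : 0 ≤ f T)
    (hc : f T = 0 → 0 < c) : ∃ δ > 0, ∀ s ∈ Icc T (T + δ), 0 ≤ f s := by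
  rcases eq_or_lt_of_le h0 with h | h
  · -- f T = 0, derivative positive
    have hcpos : 0 < c := hc h.symm
    have hslope : Tendsto (slope f T) (nhdsWithin T {T}ᶜ) (nhds c) :=
      hasDerivAt_iff_tendsto_slope.mp hf
    have hslope' : Tendsto (slope f T) (nhdsWithin T (Ioi T)) (nhds c) :=
      hslope.mono_left (nhdsWithin_mono _ (fun s hs => ne_of_gt hs))
    have hev : ∀ᶠ s in nhdsWithin T (Ioi T), 0 < slope f T s :=
      hslope' (Ioi_mem_nhds hcpos)
    obtain ⟨u, hu, hsub⟩ := mem_nhdsGT_iff_exists_Ioo_subset.mp hev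
    refine ⟨(u - T) / 2, by simp [hu]; linarith [mem_Ioi.mp hu], fun s hs => ?_⟩
    rcases eq_or_lt_of_le hs.1 with rfl | hTs
    · exact h0
    · have hs' : s ∈ Ioo T u := ⟨hTs, by have := hs.2; have := mem_Ioi.mp hu; linarith⟩
      have := hsub hs'
      have hsl : 0 < (f s - f T) / (s - T) := by simpa [slope, div_eq_inv_mul] using this
      have : 0 < f s - f T := by
        have := mul_pos hsl (sub_pos.mpr hTs)
        rwa [div_mul_cancel₀] at this
        exact ne_of_gt (sub_pos.mpr hTs)
      linarith [h0]
  · -- f T > 0, continuity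
    have hev : ∀ᶠ s in nhds T, 0 < f s := hf.continuousAt (Ioi_mem_nhds h)
    obtain ⟨ε, hε, hball⟩ := Metric.eventually_nhds_iff.mp hev
    refine ⟨ε / 2, by positivity, fun s hs => ?_⟩
    have : dist s T < ε := by
      rw [Real.dist_eq, abs_lt]
      constructor <;> [linarith [hs.1]; linarith [hs.2]]
    exact le_of_lt (hball this)

/-- Positivity persists on a small right interval, from continuity. -/
lemma aux_cont (f : ℝ → ℝ) (T : ℝ) (hf : ContinuousAt f T) (h : 0 < f T) :
    ∃ δ > 0, ∀ s ∈ Icc T (T + δ), 0 < f s := by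
  have hev : ∀ᶠ s in nhds T, 0 < f s := hf (Ioi_mem_nhds h)
  obtain ⟨ε, hε, hball⟩ := Metric.eventually_nhds_iff.mp hev
  refine ⟨ε / 2, by positivity, fun s hs => ?_⟩
  have : dist s T < ε := by
    rw [Real.dist_eq, abs_lt]
    constructor <;> [linarith [hs.1]; linarith [hs.2]]
  exact hball this

/-- Left-limit lemma. -/
lemma aux_limit (f : ℝ → ℝ) (T : ℝ) (hT : 0 < T) (hf : ContinuousAt f T)
    (h : ∀ s, 0 < s → s < T → 0 ≤ f s) : 0 ≤ f T := by
  have hne : (nhdsWithin T (Iio T)).NeBot := by infer_instance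
  have htend : Tendsto f (nhdsWithin T (Iio T)) (nhds (f T)) :=
    hf.continuousWithinAt.tendsto
  refine ge_of_tendsto htend ?_
  filter_upwards [Ioo_mem_nhdsLT_of_mem (show T ∈ Ioc (0:ℝ) T from ⟨hT, le_refl T⟩)]
    with s hs
  exact h s hs.1 hs.2

/-- Gronwall-type: if `f' = g - k f` with `g ≥ 0` on `[T, T+δ]` and `f T ≥ 0`,
then `f ≥ 0` on `[T, T+δ]`. -/
lemma aux_grow (f g : ℝ → ℝ) (k T δ : ℝ)
    (hd : ∀ s ∈ Icc T (T + δ), HasDerivAt f (g s - k * f s) s)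
    (hg : ∀ s ∈ Icc T (T + δ), 0 ≤ g s) (h0 : 0 ≤ f T) :
    ∀ s ∈ Icc T (T + δ), 0 ≤ f s := by
  rcases le_or_gt δ 0 with hδ | hδ
  · intro s hs
    have : s = T := le_antisymm (by have := hs.2; linarith) hs.1
    simpa [this] using h0
  set F : ℝ → ℝ := fun s => f s * Real.exp (k * s) with hF
  have hFd : ∀ s ∈ Icc T (T + δ), HasDerivAt F (g s * Real.exp (k * s)) s := by
    intro s hs
    have he : HasDerivAt (fun s => Real.exp (k * s)) (Real.exp (k * s) * k) s := by
      have h1 : HasDerivAt (fun x : ℝ => k * x) (k * 1) s := (hasDerivAt_id s).const_mul k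
      simpa [Function.comp_def] using (Real.hasDerivAt_exp (k * s)).comp s h1
    have : HasDerivAt F ((g s - k * f s) * Real.exp (k * s) + f s * (Real.exp (k * s) * k)) s :=
      (hd s hs).mul he
    convert this using 1
    ring
  have hmono : MonotoneOn F (Icc T (T + δ)) := by
    apply monotoneOn_of_deriv_nonneg (convex_Icc T (T + δ))
    · exact fun s hs => (hFd s hs).continuousAt.continuousWithinAt
    · intro s hs
      rw [interior_Icc] at hs
      exact ((hFd s (Ioo_subset_Icc_self hs)).differentiableAt).differentiableWithinAt
    · intro s hs
      rw [interior_Icc] at hs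
      rw [(hFd s (Ioo_subset_Icc_self hs)).deriv]
      exact mul_nonneg (hg s (Ioo_subset_Icc_self hs)) (Real.exp_pos _).le
  intro s hs
  have hFT : 0 ≤ F T := mul_nonneg h0 (Real.exp_pos _).le
  have : F T ≤ F s := hmono (left_mem_Icc.mpr (by linarith)) hs hs.1
  have hFs : 0 ≤ F s := le_trans hFT this
  have hepos := Real.exp_pos (k * s)
  have hFs' : 0 ≤ f s * Real.exp (k * s) := hFs
  exact (mul_nonneg_iff_of_pos_right hepos).mp hFs'


/-- The set `E = [0,1] × [0,∞) × [0,∞)` is positively invariant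
under the flow of each of the vector fields `g(·,0)` and `g(·,1)`. -/
theorem stmt_0
    (a q₁ c₁ d c₁M dM q₂ q₃ c₂ c₃ c₂M c₃M : ℝ)
    (ha : 0 < a) (hq₁ : 0 < q₁) (hc₁ : 0 < c₁) (hd : 0 < d)
    (hc₁M : 0 < c₁M) (hdM : 0 < dM)
    (hq₂ : 0 ≤ q₂) (hq₃ : 0 ≤ q₃) (hc₂ : 0 ≤ c₂) (hc₃ : 0 ≤ c₃)
    (hc₂M : 0 ≤ c₂M) (hc₃M : 0 ≤ c₃M)
    (i : ℝ) (hi : i = 0 ∨ i = 1)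
    (x₁ x₂ x₃ : ℝ → ℝ)
    (hx₁ : ∀ t ≥ (0:ℝ), HasDerivAt x₁
      (a * (1 - x₁ t) - (q₁ + q₂ * x₂ t + q₃ * x₃ t) * x₁ t) t)
    (hx₂ : ∀ t ≥ (0:ℝ), HasDerivAt x₂
      (c₁ / (1 + c₂ * x₂ t + c₃ * x₃ t) * x₁ t - d * x₂ t) t)
    (hx₃ : ∀ t ≥ (0:ℝ), HasDerivAt x₃
      (c₁M / (1 + c₂M * x₂ t + c₃M * x₃ t) * i - dM * x₃ t) t)
    (h0 : x₁ 0 ∈ Icc (0:ℝ) 1 ∧ 0 ≤ x₂ 0 ∧ 0 ≤ x₃ 0) :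
    ∀ t ≥ (0:ℝ), x₁ t ∈ Icc (0:ℝ) 1 ∧ 0 ≤ x₂ t ∧ 0 ≤ x₃ t := by
  
  have hi0 : 0 ≤ i := by rcases hi with h | h <;> rw [h] <;> norm_num
  by_contra hcon
  push_neg at hcon
  obtain ⟨t₀, ht₀, hP0⟩ := hcon
  set P : ℝ → Prop := fun t => x₁ t ∈ Icc (0:ℝ) 1 ∧ 0 ≤ x₂ t ∧ 0 ≤ x₃ t with hPdef
  set A : Set ℝ := {t | 0 ≤ t ∧ ∀ s, 0 ≤ s → s ≤ t → P s} with hAdef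
  have h0A : (0:ℝ) ∈ A := by
    refine ⟨le_refl 0, fun s hs hs' => ?_⟩
    have : s = 0 := le_antisymm hs' hs
    rw [this]; exact h0
  have hbdd : BddAbove A := by
    refine ⟨t₀, fun t ht => ?_⟩
    by_contra h
    push_neg at h
    have hp := ht.2 t₀ ht₀ h.le
    exact absurd hp.2.2 (not_le.mpr (hP0 hp.1 hp.2.1))
  set T := sSup A with hTdef
  have hT0 : 0 ≤ T := le_csSup hbdd h0A
  have hPlt : ∀ s, 0 ≤ s → s < T → P s := by
    intro s hs hsT
    obtain ⟨t, htA, hst⟩ := exists_lt_of_lt_csSup ⟨0, h0A⟩ hsT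
    exact htA.2 s hs hst.le
  -- continuity at T
  have cont₁ : ContinuousAt x₁ T := (hx₁ T hT0).continuousAt
  have cont₂ : ContinuousAt x₂ T := (hx₂ T hT0).continuousAt
  have cont₃ : ContinuousAt x₃ T := (hx₃ T hT0).continuousAt
  have hPT : P T := by
    rcases eq_or_lt_of_le hT0 with h | h
    · rw [← h]; exact h0
    · refine ⟨⟨?_, ?_⟩, ?_, ?_⟩
      · exact aux_limit x₁ T h cont₁ (fun s hs hsT => (hPlt s hs.le hsT).1.1
          )
      · have hub : (0:ℝ) ≤ 1 - x₁ T := aux_limit (fun s => 1 - x₁ s) T h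
          (continuousAt_const.sub cont₁)
          (fun s hs hsT => show (0:ℝ) ≤ 1 - x₁ s by linarith [(hPlt s hs.le hsT).1.2])
        linarith
      · exact aux_limit x₂ T h cont₂ (fun s hs hsT => (hPlt s hs.le hsT).2.1)
      · exact aux_limit x₃ T h cont₃ (fun s hs hsT => (hPlt s hs.le hsT).2.2)
  obtain ⟨hx1T, hx2T, hx3T⟩ := hPT
  -- persistence of x₁ ≥ 0
  obtain ⟨δ₁, hδ₁, h1⟩ := aux_persist x₁ T _ (hx₁ T hT0) hx1T.1
    (fun h => by rw [h]; ring_nf; exact ha)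
  -- persistence of x₁ ≤ 1
  obtain ⟨δ₂, hδ₂, h2⟩ := aux_persist (fun s => 1 - x₁ s) T _
    ((hx₁ T hT0).const_sub 1) (by simpa using hx1T.2)
    (fun h => by
      have h' : 1 - x₁ T = 0 := h
      have hx1 : x₁ T = 1 := by linarith
      rw [hx1]
      have h2' := mul_nonneg hq₂ hx2T
      have h3' := mul_nonneg hq₃ hx3T
      nlinarith)
  -- denominator positivity persists
  obtain ⟨δ₃, hδ₃, h3⟩ := aux_cont (fun s => 1 + c₂ * x₂ s + c₃ * x₃ s) T
    (by fun_prop)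
    (show (0:ℝ) < 1 + c₂ * x₂ T + c₃ * x₃ T by
      have := mul_nonneg hc₂ hx2T; have := mul_nonneg hc₃ hx3T; linarith)
  obtain ⟨δ₄, hδ₄, h4⟩ := aux_cont (fun s => 1 + c₂M * x₂ s + c₃M * x₃ s) T
    (by fun_prop)
    (show (0:ℝ) < 1 + c₂M * x₂ T + c₃M * x₃ T by
      have := mul_nonneg hc₂M hx2T; have := mul_nonneg hc₃M hx3T; linarith)
  set δ := min (min δ₁ δ₂) (min δ₃ δ₄) with hδdef
  have hδ : 0 < δ := by
    simp only [hδdef, lt_min_iff]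
    exact ⟨⟨hδ₁, hδ₂⟩, hδ₃, hδ₄⟩
  have hsub : ∀ δ' : ℝ, δ ≤ δ' → Icc T (T + δ) ⊆ Icc T (T + δ') :=
    fun δ' hle => Icc_subset_Icc (le_refl T) (by linarith)
  have hδle₁ : δ ≤ δ₁ := le_trans (min_le_left _ _) (min_le_left _ _)
  have hδle₂ : δ ≤ δ₂ := le_trans (min_le_left _ _) (min_le_right _ _)
  have hδle₃ : δ ≤ δ₃ := le_trans (min_le_right _ _) (min_le_left _ _)
  have hδle₄ : δ ≤ δ₄ := le_trans (min_le_right _ _) (min_le_right _ _)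
  have hx1lo : ∀ s ∈ Icc T (T + δ), 0 ≤ x₁ s := fun s hs => h1 s (hsub δ₁ hδle₁ hs)
  have hx1hi : ∀ s ∈ Icc T (T + δ), x₁ s ≤ 1 := fun s hs => by
    have h2' : (0:ℝ) ≤ 1 - x₁ s := h2 s (hsub δ₂ hδle₂ hs); linarith
  have hden : ∀ s ∈ Icc T (T + δ), 0 < 1 + c₂ * x₂ s + c₃ * x₃ s :=
    fun s hs => h3 s (hsub δ₃ hδle₃ hs)
  have hdenM : ∀ s ∈ Icc T (T + δ), 0 < 1 + c₂M * x₂ s + c₃M * x₃ s :=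
    fun s hs => h4 s (hsub δ₄ hδle₄ hs)
  -- x₂ stays nonnegative
  have hx2' : ∀ s ∈ Icc T (T + δ), 0 ≤ x₂ s := by
    apply aux_grow x₂ (fun s => c₁ / (1 + c₂ * x₂ s + c₃ * x₃ s) * x₁ s) d T δ
    · exact fun s hs => hx₂ s (le_trans hT0 hs.1)
    · exact fun s hs => mul_nonneg (div_nonneg hc₁.le (hden s hs).le) (hx1lo s hs)
    · exact hx2T
  -- x₃ stays nonnegative
  have hx3' : ∀ s ∈ Icc T (T + δ), 0 ≤ x₃ s := by
    apply aux_grow x₃ (fun s => c₁M / (1 + c₂M * x₂ s + c₃M * x₃ s) * i) dM T δ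
    · exact fun s hs => hx₃ s (le_trans hT0 hs.1)
    · exact fun s hs => mul_nonneg (div_nonneg hc₁M.le (hdenM s hs).le) hi0
    · exact hx3T
  have hTδA : T + δ ∈ A := by
    refine ⟨by linarith, fun s hs hsle => ?_⟩
    rcases le_or_gt s T with h | h
    · rcases lt_or_eq_of_le h with h' | h'
      · exact hPlt s hs h'
      · rw [h']; exact ⟨hx1T, hx2T, hx3T⟩
    · have hsI : s ∈ Icc T (T + δ) := ⟨h.le, hsle⟩
      exact ⟨⟨hx1lo s hsI, hx1hi s hsI⟩, hx2' s hsI, hx3' s hsI⟩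
  have : T + δ ≤ T := le_csSup hbdd hTδA
  linarith
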